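/- For v₁,…,v_k ∈ ℝⁿ define vol(v₁,…,v_k) := √(det((vᵢ·vⱼ)_{1≤i,j≤k})). Let s₀,…,s_n ∈ ℝⁿ with pairwise distances in [a, d] and vol(e₁,…,e_n) ≥ θ > 0, where eᵢ := (sᵢ−s₀)/|sᵢ−s₀|. Then the points s₀,…,s_n are affinely independent, and the affine map F from the standard n-simplex (with vertices at the standard basis configuration, standard metric) to ℝⁿ sending the i-th vertex to sᵢ satisfies C₁(a,θ,n)·|ξ| ≤ |dF(ξ)| ≤ C₂(d,n)·|ξ| for all tangent vectors ξ, with constants C₁ depending only on a, θ, n and C₂ depending only on d, n. -/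

import Mathlib

open scoped RealInnerProductSpace

/-- `vol(v₁,…,v_k) = √ det (⟪vᵢ,vⱼ⟫)`. -/
noncomputable def gramVol {n m : ℕ} (v : Fin m → EuclideanSpace ℝ (Fin n)) : ℝ :=
  Real.sqrt (Matrix.det (Matrix.of fun i j => ⟪v i, v j⟫))

lemma euclid_abs_le_norm {n : ℕ} (x : EuclideanSpace ℝ (Fin n)) (j : Fin n) : |x j| ≤ ‖x‖ := by
  rw [EuclideanSpace.norm_eq, ← Real.sqrt_sq_eq_abs]
  apply Real.sqrt_le_sqrt
  simpa using Finset.single_le_sum (f := fun i => ‖x i‖ ^2) (fun i _ => sq_nonneg _) (Finset.mem_univ j)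

lemma abs_det_le_factorial {n : ℕ} (A : Matrix (Fin n) (Fin n) ℝ) (h : ∀ i j, |A i j| ≤ 1) :
    |A.det| ≤ n.factorial := by
  rw [Matrix.det_apply]
  calc |∑ σ : Equiv.Perm (Fin n), Equiv.Perm.sign σ • ∏ i, A (σ i) i|
      ≤ ∑ σ : Equiv.Perm (Fin n), |Equiv.Perm.sign σ • ∏ i, A (σ i) i| :=
        Finset.abs_sum_le_sum_abs _ _
    _ ≤ ∑ _σ : Equiv.Perm (Fin n), (1:ℝ) := by
        apply Finset.sum_le_sum
        intro σ _
        rcases Int.units_eq_one_or (Equiv.Perm.sign σ) with hs | hs <;>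
        · rw [hs]
          simp only [Units.smul_def, Units.val_one, Units.val_neg, one_smul, neg_smul, abs_neg,
            one_zsmul, neg_zsmul]
          rw [Finset.abs_prod]
          exact Finset.prod_le_one (fun i _ => abs_nonneg _) (fun i _ => h _ _)
    _ = n.factorial := by simp [Fintype.card_perm]

set_option maxHeartbeats 1000000 in
/-- quantitative nondegeneracy.  If `s₀,…,s_n ∈ ℝⁿ` have pairwise
distances in `[a,d]` and the unit vectors `eᵢ = (sᵢ-s₀)/|sᵢ-s₀|` satisfy
`vol(e₁,…,e_n) ≥ θ`, then the points are affinely independent and the differential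
of the affine map from the standard simplex sending the `i`-th vertex to `sᵢ`
(given on sum-zero vectors `ξ` by `ξ ↦ ∑ ξᵢ sᵢ`) satisfies
`C₁ ‖ξ‖ ≤ ‖∑ ξᵢ sᵢ‖ ≤ C₂ ‖ξ‖` with `C₁ = C₁(a,θ,n)` and `C₂ = C₂(d,n)`. -/
theorem stmt_13 (n : ℕ) (a θ : ℝ) (ha : 0 < a) (hθ : 0 < θ) :
    ∃ C₁ > (0 : ℝ), ∀ d : ℝ, ∃ C₂ > (0 : ℝ),
      ∀ s : Fin (n + 1) → EuclideanSpace ℝ (Fin n),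
        (∀ i j, i ≠ j → a ≤ dist (s i) (s j) ∧ dist (s i) (s j) ≤ d) →
        θ ≤ gramVol (fun i : Fin n => (dist (s i.succ) (s 0))⁻¹ • (s i.succ - s 0)) →
        AffineIndependent ℝ s ∧
        ∀ ξ : EuclideanSpace ℝ (Fin (n + 1)), (∑ i, ξ i) = 0 →
          C₁ * ‖ξ‖ ≤ ‖∑ i, ξ i • s i‖ ∧ ‖∑ i, ξ i • s i‖ ≤ C₂ * ‖ξ‖ := by
  have hC₁pos : (0:ℝ) < θ * a / (((n:ℝ)+1)^3 * n.factorial) := by positivity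
  refine ⟨θ * a / (((n:ℝ)+1)^3 * n.factorial), hC₁pos, fun d =>
    ⟨((n:ℝ)+1) * (|d|+1), by positivity, fun s hd hvol => ?_⟩⟩
  set C₁ := θ * a / (((n:ℝ)+1)^3 * n.factorial) with hC₁def
  set r : Fin n → ℝ := fun i => dist (s i.succ) (s 0) with hrdef
  have hra : ∀ i, a ≤ r i := fun i => (hd _ _ (Fin.succ_ne_zero i)).1
  have hrpos : ∀ i, 0 < r i := fun i => lt_of_lt_of_le ha (hra i)
  set e : Fin n → EuclideanSpace ℝ (Fin n) := fun i => (r i)⁻¹ • (s i.succ - s 0) with hedef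
  have hre : ∀ i, (r i) • e i = s i.succ - s 0 := by
    intro i
    rw [hedef]
    simp only [smul_smul]
    rw [mul_inv_cancel₀ (ne_of_gt (hrpos i)), one_smul]
  have hnorme : ∀ i, ‖e i‖ = 1 := by
    intro i
    rw [hedef]
    simp only [norm_smul, norm_inv, Real.norm_eq_abs, abs_of_pos (hrpos i)]
    exact inv_mul_cancel₀ (ne_of_gt (hrpos i))
  have hentry : ∀ i j, |e i j| ≤ 1 := fun i j => (euclid_abs_le_norm (e i) j).trans (le_of_eq (hnorme i))
  set M : Matrix (Fin n) (Fin n) ℝ := Matrix.of fun i j => e j i with hMdef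
  -- θ ≤ |det M|
  have hdet : θ ≤ |M.det| := by
    have hG : (Matrix.of fun i j => ⟪e i, e j⟫) = M.transpose * M := by
      ext i j
      rw [Matrix.mul_apply]
      simp [hMdef, PiLp.inner_apply, RCLike.inner_apply, Matrix.transpose_apply, mul_comm]
    calc θ ≤ gramVol e := hvol
      _ = |M.det| := by
          rw [gramVol, hG, Matrix.det_mul, Matrix.det_transpose, ← sq, Real.sqrt_sq_eq_abs]
  -- key lower bound
  have key : ∀ ξ : EuclideanSpace ℝ (Fin (n + 1)), (∑ i, ξ i) = 0 →
      C₁ * ‖ξ‖ ≤ ‖∑ i, ξ i • s i‖ := by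
    intro ξ hξ
    set y : EuclideanSpace ℝ (Fin n) := ∑ i, ξ i • s i with hydef
    set c : Fin n → ℝ := fun i => ξ i.succ * r i with hcdef
    have hy : y = ∑ i : Fin n, c i • e i := by
      have h1 : y = ∑ i, ξ i • (s i - s 0) := by
        rw [hydef]
        rw [Finset.sum_congr rfl (fun i _ => smul_sub (ξ i) (s i) (s 0)), Finset.sum_sub_distrib,
          ← Finset.sum_smul, hξ, zero_smul, sub_zero]
      rw [h1, Fin.sum_univ_succ, sub_self, smul_zero, zero_add]
      refine Finset.sum_congr rfl (fun i _ => ?_)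
      rw [← hre i, smul_smul, hcdef]
    -- coordinates
    have hycoord : ∀ j, y j = ∑ i, c i * e i j := by
      intro j
      rw [hy]
      rw [WithLp.ofLp_sum, Finset.sum_apply]
      rfl
    have hMv : M.mulVec c = fun j => y j := by
      funext j
      rw [Matrix.mulVec, dotProduct, hycoord j]
      simp [hMdef, mul_comm]
    have hcramer : ∀ i, M.det * c i = ∑ j, M.adjugate i j * y j := by
      intro i
      have h2 : (M.adjugate * M).mulVec c = M.det • c := by
        rw [Matrix.adjugate_mul, Matrix.smul_mulVec, Matrix.one_mulVec]
      have h3 : M.adjugate.mulVec (M.mulVec c) = M.det • c := by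
        rw [Matrix.mulVec_mulVec]; exact h2
      have h4 := congrFun h3 i
      rw [hMv] at h4
      simpa [Matrix.mulVec, dotProduct, smul_eq_mul] using h4.symm
    have hadjbound : ∀ i j, |M.adjugate i j| ≤ n.factorial := by
      intro i j
      rw [Matrix.adjugate_apply]
      apply abs_det_le_factorial
      intro k l
      rw [Matrix.updateRow_apply]
      split_ifs with hk
      · rw [Pi.single_apply]
        split_ifs <;> simp
      · exact hentry l k
    have hcbound : ∀ i, θ * |c i| ≤ (n.factorial : ℝ) * n * ‖y‖ := by
      intro i
      calc θ * |c i| ≤ |M.det| * |c i| :=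
            mul_le_mul_of_nonneg_right hdet (abs_nonneg _)
        _ = |M.det * c i| := (abs_mul _ _).symm
        _ = |∑ j, M.adjugate i j * y j| := by rw [hcramer i]
        _ ≤ ∑ j, |M.adjugate i j * y j| := Finset.abs_sum_le_sum_abs _ _
        _ ≤ ∑ _j : Fin n, (n.factorial : ℝ) * ‖y‖ := by
            refine Finset.sum_le_sum (fun j _ => ?_)
            rw [abs_mul]
            exact mul_le_mul (hadjbound i j) (euclid_abs_le_norm y j) (abs_nonneg _)
              (Nat.cast_nonneg _)
        _ = (n.factorial : ℝ) * n * ‖y‖ := by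
            rw [Finset.sum_const, Finset.card_univ, Fintype.card_fin, nsmul_eq_mul]; ring
    set P : ℝ := (n.factorial : ℝ) * n / (θ * a) with hPdef
    have hPnonneg : 0 ≤ P := by positivity
    have hsucc : ∀ i : Fin n, |ξ i.succ| ≤ P * ‖y‖ := by
      intro i
      rw [hPdef, div_mul_eq_mul_div, le_div_iff₀ (by positivity)]
      have h5 : |ξ i.succ| * (θ * a) ≤ θ * |c i| := by
        rw [hcdef]
        simp only [abs_mul, abs_of_pos (hrpos i)]
        calc |ξ i.succ| * (θ * a) = θ * (|ξ i.succ| * a) := by ring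
          _ ≤ θ * (|ξ i.succ| * r i) :=
            mul_le_mul_of_nonneg_left (mul_le_mul_of_nonneg_left (hra i) (abs_nonneg _)) hθ.le
      calc |ξ i.succ| * (θ * a) ≤ θ * |c i| := h5
        _ ≤ (n.factorial : ℝ) * n * ‖y‖ := hcbound i
        _ = (n.factorial : ℝ) * ↑n * ‖y‖ := rfl
    have hall : ∀ j : Fin (n+1), |ξ j| ≤ (n : ℝ) * (P * ‖y‖) := by
      intro j
      induction j using Fin.cases with
      | zero =>
        have h6 : ξ 0 = -∑ i : Fin n, ξ i.succ := by
          have := hξ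
          rw [Fin.sum_univ_succ] at this
          linarith
        rw [h6, abs_neg]
        calc |∑ i : Fin n, ξ i.succ| ≤ ∑ i : Fin n, |ξ i.succ| := Finset.abs_sum_le_sum_abs _ _
          _ ≤ ∑ _i : Fin n, P * ‖y‖ := Finset.sum_le_sum (fun i _ => hsucc i)
          _ = (n : ℝ) * (P * ‖y‖) := by
              rw [Finset.sum_const, Finset.card_univ, Fintype.card_fin, nsmul_eq_mul]
      | succ i =>
        have h7 : (1 : ℝ) ≤ n := by exact_mod_cast Nat.one_le_iff_ne_zero.2 (Nat.pos_iff_ne_zero.1 i.pos)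
        calc |ξ i.succ| ≤ P * ‖y‖ := hsucc i
          _ = 1 * (P * ‖y‖) := (one_mul _).symm
          _ ≤ (n : ℝ) * (P * ‖y‖) := mul_le_mul_of_nonneg_right h7 (by positivity)
    have hnormxi : ‖ξ‖ ≤ ((n:ℝ)+1) * ((n : ℝ) * (P * ‖y‖)) := by
      set B := (n : ℝ) * (P * ‖y‖) with hBdef
      have hB : 0 ≤ B := by positivity
      rw [EuclideanSpace.norm_eq]
      have h8 : ∑ j, ‖ξ j‖^2 ≤ (((n:ℝ)+1) * B)^2 := by
        calc ∑ j, ‖ξ j‖^2 ≤ ∑ _j : Fin (n+1), B^2 := by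
              refine Finset.sum_le_sum (fun j _ => ?_)
              rw [Real.norm_eq_abs, sq_abs, ← sq_abs]
              exact pow_le_pow_left₀ (abs_nonneg _) (hall j) 2
          _ = ((n:ℝ)+1) * B^2 := by
              rw [Finset.sum_const, Finset.card_univ, Fintype.card_fin, nsmul_eq_mul]
              push_cast; ring
          _ ≤ (((n:ℝ)+1) * B)^2 := by nlinarith [sq_nonneg B, Nat.cast_nonneg (α := ℝ) n]
      calc Real.sqrt (∑ j, ‖ξ j‖^2) ≤ Real.sqrt ((((n:ℝ)+1) * B)^2) := Real.sqrt_le_sqrt h8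
        _ = ((n:ℝ)+1) * B := Real.sqrt_sq (by positivity)
    -- conclude
    have hfinal : C₁ * (((n:ℝ)+1) * ((n : ℝ) * P)) ≤ 1 := by
      rw [hC₁def, hPdef, div_mul_eq_mul_div, div_le_one (by positivity)]
      have hfac : (0:ℝ) < n.factorial := by positivity
      have hn2 : (n:ℝ)^2 ≤ ((n:ℝ)+1)^2 := by nlinarith [Nat.cast_nonneg (α := ℝ) n]
      have hc : (n.factorial:ℝ) * (n:ℝ) / (θ * a) * (θ * a) = (n.factorial:ℝ) * (n:ℝ) :=
        div_mul_cancel₀ _ (by positivity)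
      calc θ * a * (((n:ℝ)+1) * ((n:ℝ) * ((n.factorial:ℝ) * (n:ℝ) / (θ * a))))
          = ((n.factorial:ℝ) * (n:ℝ) / (θ * a) * (θ * a)) * (((n:ℝ)+1) * (n:ℝ)) := by ring
        _ = ((n:ℝ)+1) * ((n:ℝ)^2 * (n.factorial:ℝ)) := by rw [hc]; ring
        _ ≤ ((n:ℝ)+1) * (((n:ℝ)+1)^2 * (n.factorial:ℝ)) := by
            refine mul_le_mul_of_nonneg_left (mul_le_mul_of_nonneg_right hn2 hfac.le) (by positivity)
        _ = ((n:ℝ)+1)^3 * (n.factorial:ℝ) := by ring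
    calc C₁ * ‖ξ‖ ≤ C₁ * (((n:ℝ)+1) * ((n : ℝ) * (P * ‖y‖))) :=
          mul_le_mul_of_nonneg_left hnormxi hC₁pos.le
      _ = (C₁ * (((n:ℝ)+1) * ((n : ℝ) * P))) * ‖y‖ := by ring
      _ ≤ 1 * ‖y‖ := mul_le_mul_of_nonneg_right hfinal (norm_nonneg _)
      _ = ‖y‖ := one_mul _
  constructor
  · -- affine independence
    rw [affineIndependent_iff]
    intro t w hw hsum i hi
    set w' : EuclideanSpace ℝ (Fin (n+1)) := WithLp.toLp 2 (fun j => if j ∈ t then w j else 0) with hw'def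
    have hw'sum : (∑ j, w' j) = 0 := by
      rw [hw'def]
      simp only [PiLp.toLp_apply]
      rw [Finset.sum_ite_mem, Finset.univ_inter]
      exact hw
    have hw'vec : (∑ j, w' j • s j) = 0 := by
      rw [← hsum]
      calc ∑ j, w' j • s j = ∑ j, (if j ∈ t then w j • s j else 0) := by
            refine Finset.sum_congr rfl fun j _ => ?_
            simp only [hw'def, PiLp.toLp_apply]
            split_ifs with h <;> simp
        _ = ∑ j ∈ t, w j • s j := by rw [Finset.sum_ite_mem, Finset.univ_inter]
    have := key w' hw'sum
    rw [hw'vec, norm_zero] at this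
    have hw'0 : ‖w'‖ = 0 := le_antisymm (by nlinarith [norm_nonneg w']) (norm_nonneg _)
    have : w' i = 0 := by
      have := norm_eq_zero.1 hw'0
      exact congrArg (fun v => v i) this
    have h9 : (if i ∈ t then w i else 0) = 0 := this
    rwa [if_pos hi] at h9
  · -- bounds
    intro ξ hξ
    refine ⟨key ξ hξ, ?_⟩
    have h1 : (∑ i, ξ i • s i) = ∑ i, ξ i • (s i - s 0) := by
      rw [Finset.sum_congr rfl (fun i _ => smul_sub (ξ i) (s i) (s 0)), Finset.sum_sub_distrib,
        ← Finset.sum_smul, hξ, zero_smul, sub_zero]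
    rw [h1]
    calc ‖∑ i, ξ i • (s i - s 0)‖ ≤ ∑ i, ‖ξ i • (s i - s 0)‖ := norm_sum_le _ _
      _ ≤ ∑ _i : Fin (n+1), (|d|+1) * ‖ξ‖ := by
          refine Finset.sum_le_sum (fun i _ => ?_)
          rw [norm_smul, Real.norm_eq_abs]
          by_cases hi : i = 0
          · subst hi
            rw [sub_self, norm_zero, mul_zero]
            positivity
          · have hdist : ‖s i - s 0‖ ≤ |d| + 1 := by
              rw [← dist_eq_norm]
              calc dist (s i) (s 0) ≤ d := (hd i 0 hi).2
                _ ≤ |d| + 1 := by cases abs_cases d <;> linarith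
            calc |ξ i| * ‖s i - s 0‖ ≤ ‖ξ‖ * (|d|+1) :=
                  mul_le_mul (euclid_abs_le_norm ξ i) hdist (norm_nonneg _) (norm_nonneg _)
              _ = (|d|+1) * ‖ξ‖ := mul_comm _ _
      _ = ((n:ℝ)+1) * (|d|+1) * ‖ξ‖ := by
          rw [Finset.sum_const, Finset.card_univ, Fintype.card_fin, nsmul_eq_mul]
          push_cast; ring
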